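/- arXiv:2412.10376 — 3 statements merged into one kernel-verified Lean document; each statement's English description precedes it below -/
import Mathlib

section
/- Let f be continuous on [0,2π] and j ≥ 1 an integer. Then a_j = (1/π)∫₀^{2π} f(x)cos(jx)dx can be written as a_j = (1/(πj)) Σ_{k=1}^{2j} (−1)^{k−1} (f(x_{2k−1}) − f(x_{2k})), for some points x_{2k−1}, x_{2k} ∈ [π(k−1)/j, πk/j] with x_{2k−1} ≤ x_{2k}. -/
open Real

lemma mvt_int (f g : ℝ → ℝ) (a b : ℝ) (hab : a ≤ b)
    (hf : ContinuousOn f (Set.Icc a b)) (hg : ContinuousOn g (Set.Icc a b))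
    (hg0 : ∀ t ∈ Set.Icc a b, 0 ≤ g t) :
    ∃ c ∈ Set.Icc a b, ∫ t in a..b, f t * g t = f c * ∫ t in a..b, g t := by
  obtain ⟨u, hu, humin⟩ := (isCompact_Icc (a := a) (b := b)).exists_isMinOn
    (Set.nonempty_Icc.2 hab) hf
  obtain ⟨v, hv, hvmax⟩ := (isCompact_Icc (a := a) (b := b)).exists_isMaxOn
    (Set.nonempty_Icc.2 hab) hf
  have hgint : IntervalIntegrable g MeasureTheory.volume a b :=
    (hg.mono (by rw [Set.uIcc_of_le hab] : Set.uIcc a b ⊆ Set.Icc a b)).intervalIntegrable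
  have hfgint : IntervalIntegrable (fun t => f t * g t) MeasureTheory.volume a b :=
    ((hf.mul hg).mono (by rw [Set.uIcc_of_le hab] : Set.uIcc a b ⊆ Set.Icc a b)).intervalIntegrable
  have h1 : f u * ∫ t in a..b, g t ≤ ∫ t in a..b, f t * g t := by
    rw [← intervalIntegral.integral_const_mul]
    apply intervalIntegral.integral_mono_on hab (hgint.const_mul _) hfgint
    intro t ht
    exact mul_le_mul_of_nonneg_right (humin ht) (hg0 t ht)
  have h2 : (∫ t in a..b, f t * g t) ≤ f v * ∫ t in a..b, g t := by
    rw [← intervalIntegral.integral_const_mul]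
    apply intervalIntegral.integral_mono_on hab hfgint (hgint.const_mul _)
    intro t ht
    exact mul_le_mul_of_nonneg_right (hvmax ht) (hg0 t ht)
  have huv : Set.uIcc u v ⊆ Set.Icc a b := Set.uIcc_subset_Icc hu hv
  have hFc : ContinuousOn (fun c => f c * ∫ t in a..b, g t) (Set.uIcc u v) :=
    (hf.mono huv).mul continuousOn_const
  have hmem : (∫ t in a..b, f t * g t) ∈
      Set.uIcc (f u * ∫ t in a..b, g t) (f v * ∫ t in a..b, g t) := by
    rw [Set.uIcc_of_le (h1.trans h2)]
    exact ⟨h1, h2⟩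
  obtain ⟨c, hc, hceq⟩ := intermediate_value_uIcc hFc hmem
  exact ⟨c, huv hc, hceq.symm⟩

lemma integral_cos_jt (j : ℕ) (hj : 1 ≤ j) (a b : ℝ) :
    ∫ t in a..b, Real.cos (j * t) = (Real.sin (j * b) - Real.sin (j * a)) / j := by
  have hj0 : (j : ℝ) ≠ 0 := by positivity
  rw [intervalIntegral.integral_comp_mul_left Real.cos hj0, integral_cos, smul_eq_mul]
  field_simp

lemma half_mvt (f : ℝ → ℝ) (j : ℕ) (hj : 1 ≤ j) (a b : ℝ) (hab : a ≤ b)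
    (hf : ContinuousOn f (Set.Icc a b)) (ε : ℝ) (hε : ε = 1 ∨ ε = -1)
    (hsign : ∀ t ∈ Set.Icc a b, 0 ≤ ε * Real.cos (j * t)) :
    ∃ c ∈ Set.Icc a b,
      ∫ t in a..b, f t * Real.cos (j * t) = f c * ((Real.sin (j * b) - Real.sin (j * a)) / j) := by
  have hεne : ε ≠ 0 := by rcases hε with h | h <;> simp [h]
  have hε2 : ε * ε = 1 := by rcases hε with h | h <;> simp [h]
  obtain ⟨c, hc, hceq⟩ := mvt_int f (fun t => ε * Real.cos (j * t)) a b hab hf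
    (continuousOn_const.mul ((Real.continuous_cos.comp
      (continuous_const.mul continuous_id)).continuousOn)) hsign
  refine ⟨c, hc, ?_⟩
  have e1 : (∫ t in a..b, f t * (ε * Real.cos (j * t)))
      = ε * ∫ t in a..b, f t * Real.cos (j * t) := by
    rw [← intervalIntegral.integral_const_mul]
    congr 1; ext t; ring
  have e2 : (∫ t in a..b, ε * Real.cos (j * t))
      = ε * ∫ t in a..b, Real.cos (j * t) := intervalIntegral.integral_const_mul _ _
  rw [e1, e2, integral_cos_jt j hj] at hceq
  have := mul_left_cancel₀ hεne (by linarith [hceq] : ε * (∫ t in a..b, f t * Real.cos (j * t))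
      = ε * (f c * ((Real.sin (j * b) - Real.sin (j * a)) / j)))
  exact this

lemma key_interval (f : ℝ → ℝ) (hf : ContinuousOn f (Set.Icc 0 (2 * π)))
    (j k : ℕ) (hj : 1 ≤ j) (hk : 1 ≤ k) (hk2 : k ≤ 2 * j) :
    ∃ c d, c ∈ Set.Icc (π * ((k : ℝ) - 1) / j) (π * k / j) ∧
      d ∈ Set.Icc (π * ((k : ℝ) - 1) / j) (π * k / j) ∧ c ≤ d ∧
      ∫ t in (π * ((k : ℝ) - 1) / j)..(π * k / j), f t * Real.cos (j * t)
        = (-1 : ℝ) ^ (k - 1) * (f c - f d) / j := by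
  have hjR : (1 : ℝ) ≤ j := by exact_mod_cast hj
  have hkR : (1 : ℝ) ≤ k := by exact_mod_cast hk
  have hk2R : (k : ℝ) ≤ 2 * j := by exact_mod_cast hk2
  have hj0 : (0 : ℝ) < j := by linarith
  set a : ℝ := π * ((k : ℝ) - 1) / j with ha
  set m : ℝ := π * (2 * (k : ℝ) - 1) / (2 * j) with hm
  set b : ℝ := π * k / j with hb
  have hja : (j : ℝ) * a = ((k : ℝ) - 1) * π := by rw [ha]; field_simp
  have hjm : (j : ℝ) * m = (k : ℝ) * π - π / 2 := by rw [hm]; field_simp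
  have hjb : (j : ℝ) * b = (k : ℝ) * π := by rw [hb]; field_simp
  have ham : a ≤ m := by
    rw [ha, hm, div_le_div_iff₀ (by positivity) (by positivity)]
    nlinarith [pi_pos]
  have hmb : m ≤ b := by
    rw [hm, hb, div_le_div_iff₀ (by positivity) (by positivity)]
    nlinarith [pi_pos]
  have hsub : Set.Icc a b ⊆ Set.Icc 0 (2 * π) := by
    apply Set.Icc_subset_Icc
    · exact div_nonneg (mul_nonneg Real.pi_pos.le (by linarith)) hj0.le
    · rw [hb, div_le_iff₀ hj0]; nlinarith [pi_pos]
  have hfab := hf.mono hsub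
  -- sine values
  have hsa : Real.sin (j * a) = 0 := by
    rw [hja]
    have : ((k : ℝ) - 1) = ((k - 1 : ℕ) : ℝ) := by push_cast [hk]; ring
    rw [this, Real.sin_nat_mul_pi]
  have hkk' : (-1 : ℝ) ^ k = -(-1 : ℝ) ^ (k - 1) := by
    conv_lhs => rw [show k = (k - 1) + 1 from by omega]
    rw [pow_succ]; ring
  have hsm : Real.sin (j * m) = (-1 : ℝ) ^ (k - 1) := by
    rw [hjm, Real.sin_nat_mul_pi_sub (π / 2) k, Real.sin_pi_div_two, hkk']; ring
  have hsb : Real.sin (j * b) = 0 := by rw [hjb, Real.sin_nat_mul_pi]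
  -- sign facts
  have hcos : ∀ t : ℝ, Real.cos ((j : ℝ) * t) = (-1 : ℝ) ^ k * Real.cos ((k : ℝ) * π - j * t) := by
    intro t
    have := Real.cos_nat_mul_pi_sub ((k : ℝ) * π - j * t) k
    rw [show (k : ℝ) * π - ((k : ℝ) * π - j * t) = (j : ℝ) * t by ring] at this
    rw [this]
  have hsign1 : ∀ t ∈ Set.Icc a m, 0 ≤ (-1 : ℝ) ^ (k - 1) * Real.cos (j * t) := by
    intro t ⟨h1, h2⟩
    have hb1 : (j : ℝ) * t ≥ ((k : ℝ) - 1) * π := by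
      rw [← hja]; exact mul_le_mul_of_nonneg_left h1 hj0.le
    have hb2 : (j : ℝ) * t ≤ (k : ℝ) * π - π / 2 := by
      rw [← hjm]; exact mul_le_mul_of_nonneg_left h2 hj0.le
    have hcn : Real.cos ((k : ℝ) * π - j * t) ≤ 0 :=
      Real.cos_nonpos_of_pi_div_two_le_of_le (by linarith) (by linarith [pi_pos])
    rw [hcos t, ← mul_assoc, ← pow_add]
    have hodd : Odd (k - 1 + k) := ⟨k - 1, by omega⟩
    rw [hodd.neg_one_pow]
    linarith
  have hsign2 : ∀ t ∈ Set.Icc m b, 0 ≤ (-1 : ℝ) ^ k * Real.cos (j * t) := by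
    intro t ⟨h1, h2⟩
    have hb1 : (j : ℝ) * t ≥ (k : ℝ) * π - π / 2 := by
      rw [← hjm]; exact mul_le_mul_of_nonneg_left h1 hj0.le
    have hb2 : (j : ℝ) * t ≤ (k : ℝ) * π := by
      rw [← hjb]; exact mul_le_mul_of_nonneg_left h2 hj0.le
    have hcn : 0 ≤ Real.cos ((k : ℝ) * π - j * t) :=
      Real.cos_nonneg_of_mem_Icc ⟨by linarith [pi_pos], by linarith⟩
    rw [hcos t, ← mul_assoc, ← pow_add]
    have heven : Even (k + k) := ⟨k, rfl⟩
    rw [heven.neg_one_pow]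
    linarith
  obtain ⟨c, hc, hceq⟩ := half_mvt f j hj a m ham (hfab.mono (Set.Icc_subset_Icc le_rfl hmb))
    ((-1 : ℝ) ^ (k - 1)) (neg_one_pow_eq_or ℝ (k - 1)) hsign1
  obtain ⟨d, hd, hdeq⟩ := half_mvt f j hj m b hmb (hfab.mono (Set.Icc_subset_Icc ham le_rfl))
    ((-1 : ℝ) ^ k) (neg_one_pow_eq_or ℝ k) hsign2
  have hcmem : c ∈ Set.Icc a b := Set.Icc_subset_Icc le_rfl hmb hc
  have hdmem : d ∈ Set.Icc a b := Set.Icc_subset_Icc ham le_rfl hd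
  refine ⟨c, d, hcmem, hdmem, le_trans hc.2 hd.1, ?_⟩
  have hint1 : IntervalIntegrable (fun t => f t * Real.cos (j * t)) MeasureTheory.volume a m := by
    apply ContinuousOn.intervalIntegrable
    apply ((hfab.mono (Set.Icc_subset_Icc le_rfl hmb)).mul
      ((Real.continuous_cos.comp (continuous_const.mul continuous_id)).continuousOn)).mono
    rw [Set.uIcc_of_le ham]
  have hint2 : IntervalIntegrable (fun t => f t * Real.cos (j * t)) MeasureTheory.volume m b := by
    apply ContinuousOn.intervalIntegrable
    apply ((hfab.mono (Set.Icc_subset_Icc ham le_rfl)).mul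
      ((Real.continuous_cos.comp (continuous_const.mul continuous_id)).continuousOn)).mono
    rw [Set.uIcc_of_le hmb]
  rw [← intervalIntegral.integral_add_adjacent_intervals hint1 hint2, hceq, hdeq,
    hsa, hsm, hsb]
  ring

theorem fourier_cosine_coeff_mean_value_repr (f : ℝ → ℝ)
    (hf : ContinuousOn f (Set.Icc 0 (2 * π)))
    (j : ℕ) (hj : 1 ≤ j) :
    ∃ x : ℕ → ℝ,
      (∀ k ∈ Finset.Icc 1 (2 * j),
        x (2 * k - 1) ∈ Set.Icc (π * ((k : ℝ) - 1) / j) (π * k / j) ∧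
        x (2 * k) ∈ Set.Icc (π * ((k : ℝ) - 1) / j) (π * k / j) ∧
        x (2 * k - 1) ≤ x (2 * k)) ∧
      (1 / π) * ∫ t in (0:ℝ)..(2 * π), f t * Real.cos (j * t) =
        (1 / (π * j)) * ∑ k ∈ Finset.Icc 1 (2 * j),
          (-1 : ℝ) ^ (k - 1) * (f (x (2 * k - 1)) - f (x (2 * k))) := by
  classical
  have hchoice : ∀ k : ℕ, 1 ≤ k → k ≤ 2 * j →
      ∃ c d, c ∈ Set.Icc (π * ((k : ℝ) - 1) / j) (π * k / j) ∧
        d ∈ Set.Icc (π * ((k : ℝ) - 1) / j) (π * k / j) ∧ c ≤ d ∧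
        ∫ t in (π * ((k : ℝ) - 1) / j)..(π * k / j), f t * Real.cos (j * t)
          = (-1 : ℝ) ^ (k - 1) * (f c - f d) / j :=
    fun k hk hk2 => key_interval f hf j k hj hk hk2
  -- choice function
  let F : ℕ → ℝ × ℝ := fun k =>
    if h : 1 ≤ k ∧ k ≤ 2 * j then
      ((hchoice k h.1 h.2).choose, (hchoice k h.1 h.2).choose_spec.choose)
    else (0, 0)
  let x : ℕ → ℝ := fun n => if n % 2 = 1 then (F ((n + 1) / 2)).1 else (F (n / 2)).2
  have hx1 : ∀ k, 1 ≤ k → x (2 * k - 1) = (F k).1 := by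
    intro k hk
    have h1 : (2 * k - 1) % 2 = 1 := by omega
    have h2 : (2 * k - 1 + 1) / 2 = k := by omega
    simp only [x, h1, h2]
    simp
  have hx2 : ∀ k, x (2 * k) = (F k).2 := by
    intro k
    have h1 : (2 * k) % 2 = 0 := by omega
    have h2 : (2 * k) / 2 = k := by omega
    simp only [x, h1, h2]
    norm_num
  have hspec : ∀ k : ℕ, 1 ≤ k → k ≤ 2 * j →
      (F k).1 ∈ Set.Icc (π * ((k : ℝ) - 1) / j) (π * k / j) ∧
      (F k).2 ∈ Set.Icc (π * ((k : ℝ) - 1) / j) (π * k / j) ∧ (F k).1 ≤ (F k).2 ∧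
      ∫ t in (π * ((k : ℝ) - 1) / j)..(π * k / j), f t * Real.cos (j * t)
        = (-1 : ℝ) ^ (k - 1) * (f (F k).1 - f (F k).2) / j := by
    intro k hk hk2
    have h : 1 ≤ k ∧ k ≤ 2 * j := ⟨hk, hk2⟩
    have := (hchoice k h.1 h.2).choose_spec.choose_spec
    simp only [F, dif_pos h]
    exact this
  refine ⟨x, ?_, ?_⟩
  · intro k hk
    rw [Finset.mem_Icc] at hk
    obtain ⟨h1, h2, h3, _⟩ := hspec k hk.1 hk.2
    rw [hx1 k hk.1, hx2 k]
    exact ⟨h1, h2, h3⟩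
  · -- main computation
    have hjR : (1 : ℝ) ≤ j := by exact_mod_cast hj
    have hj0 : (0 : ℝ) < j := by linarith
    set A : ℕ → ℝ := fun i => π * i / j with hA
    have hsplit : ∫ t in (0:ℝ)..(2 * π), f t * Real.cos (j * t)
        = ∑ i ∈ Finset.range (2 * j), ∫ t in A i..A (i + 1), f t * Real.cos (j * t) := by
      rw [intervalIntegral.sum_integral_adjacent_intervals]
      · congr 1
        · simp [hA]
        · rw [hA]; push_cast; field_simp
      · intro i hi
        apply ContinuousOn.intervalIntegrable
        have hAi : A i ≤ A (i + 1) := by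
          rw [hA, div_le_div_iff₀ hj0 hj0]
          push_cast; nlinarith [pi_pos]
        have hsub : Set.uIcc (A i) (A (i + 1)) ⊆ Set.Icc 0 (2 * π) := by
          rw [Set.uIcc_of_le hAi]
          apply Set.Icc_subset_Icc
          · rw [hA]; positivity
          · rw [hA, div_le_iff₀ hj0]
            have : (i : ℝ) + 1 ≤ 2 * j := by exact_mod_cast Nat.succ_le_of_lt hi
            push_cast
            nlinarith [pi_pos]
        exact ((hf.mono hsub).mul
          ((Real.continuous_cos.comp (continuous_const.mul continuous_id)).continuousOn.mono
            (Set.subset_univ _)))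
    rw [hsplit]
    have hterm : ∀ i ∈ Finset.range (2 * j),
        ∫ t in A i..A (i + 1), f t * Real.cos (j * t)
          = (-1 : ℝ) ^ (i + 1 - 1) * (f (x (2 * (i + 1) - 1)) - f (x (2 * (i + 1)))) / j := by
      intro i hi
      rw [Finset.mem_range] at hi
      obtain ⟨_, _, _, h4⟩ := hspec (i + 1) (by omega) (by omega)
      rw [hx1 (i + 1) (by omega), hx2 (i + 1)]
      have hAe : A i = π * (((i : ℝ) + 1) - 1) / j := by rw [hA]; norm_num
      have hAe2 : A (i + 1) = π * ((i : ℕ) + 1 : ℕ) / j := by rw [hA]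
      rw [hAe, hAe2]
      convert h4 using 3 <;> push_cast <;> ring
    rw [Finset.sum_congr rfl hterm]
    rw [show Finset.Icc 1 (2 * j) = Finset.Ico 1 (2 * j + 1) by rw [Finset.Ico_add_one_right_eq_Icc],
      Finset.sum_Ico_eq_sum_range]
    simp only [Nat.add_sub_cancel]
    rw [Finset.mul_sum, Finset.mul_sum]
    apply Finset.sum_congr rfl
    intro i _
    have hπ : π ≠ 0 := Real.pi_ne_zero
    have : (1 + i) = i + 1 := by omega
    rw [this]
    field_simp
    simp
    ring
end

section
/- Let f be continuous on [0,2π] and j ≥ 1 an integer. Then there exist points x_1 ≤ x_2 ≤ … ≤ x_{4j} in [0,2π] with x_{2k−1}, x_{2k} ∈ [π(k−1)/j, πk/j] such that |a_j| ≤ (1/(πj)) Σ_{k=1}^{2j} |f(x_{2k−1}) − f(x_{2k})|, where a_j = (1/π)∫₀^{2π} f(x)cos(jx)dx. -/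
open Real

section FourierAux
open intervalIntegral

lemma abs_cos_first (i : ℕ) {s : ℝ} (h1 : π * i ≤ s) (h2 : s ≤ π * i + π/2) :
    |Real.cos s| = (-1)^i * Real.cos s := by
  have hc : Real.cos s = (-1)^i * Real.cos (s - π * i) := by
    have := Real.cos_add_nat_mul_pi (s - π * i) i
    rw [show s - π * i + i * π = s by ring] at this
    rw [this]
  have hnn : 0 ≤ Real.cos (s - π * i) := by
    apply Real.cos_nonneg_of_mem_Icc
    constructor <;> [linarith [Real.pi_pos]; linarith]
  rw [hc, abs_mul, abs_pow, abs_neg, abs_one, one_pow, one_mul, abs_of_nonneg hnn,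
    ← mul_assoc, ← pow_add, Even.neg_one_pow ⟨i, rfl⟩, one_mul]

lemma abs_cos_second (i : ℕ) {s : ℝ} (h1 : π * i + π/2 ≤ s) (h2 : s ≤ π * i + π) :
    |Real.cos s| = -((-1)^i * Real.cos s) := by
  have hc : Real.cos s = (-1)^i * Real.cos (s - π * i) := by
    have := Real.cos_add_nat_mul_pi (s - π * i) i
    rw [show s - π * i + i * π = s by ring] at this
    rw [this]
  have hnp : Real.cos (s - π * i) ≤ 0 := by
    apply Real.cos_nonpos_of_pi_div_two_le_of_le <;> linarith
  rw [hc, abs_mul, abs_pow, abs_neg, abs_one, one_pow, one_mul, abs_of_nonpos hnp,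
    ← mul_assoc, ← pow_add, Even.neg_one_pow ⟨i, rfl⟩, one_mul]

lemma integral_abs_cos_half (i : ℕ) :
    ∫ s in (π*i)..(π*i+π), |Real.cos s| = 2 := by
  have hint : ∀ a b : ℝ, IntervalIntegrable (fun s => |Real.cos s|) MeasureTheory.volume a b :=
    fun a b => (Real.continuous_cos.abs).intervalIntegrable a b
  have hsplit := intervalIntegral.integral_add_adjacent_intervals
    (a := π*i) (b := π*i+π/2) (c := π*i+π) (hint _ _) (hint _ _)
  have hcosπi : Real.cos (π * i) = (-1)^i := by
    have := Real.cos_add_nat_mul_pi 0 i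
    rw [zero_add, Real.cos_zero, mul_one, mul_comm] at this
    exact this
  have h1 : ∫ s in (π*i)..(π*i+π/2), |Real.cos s| = 1 := by
    rw [intervalIntegral.integral_congr (g := fun s => (-1)^i * Real.cos s)
      (by intro s hs
          rw [Set.uIcc_of_le (by linarith [Real.pi_pos])] at hs
          exact abs_cos_first i hs.1 hs.2),
      intervalIntegral.integral_const_mul, integral_cos]
    have hs1 : Real.sin (π*i+π/2) = (-1)^i := by
      rw [Real.sin_add_pi_div_two, hcosπi]
    have hs0 : Real.sin (π*i) = 0 := by rw [mul_comm]; exact Real.sin_nat_mul_pi i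
    rw [hs1, hs0, sub_zero, ← pow_add, Even.neg_one_pow ⟨i, rfl⟩]
  have h2 : ∫ s in (π*i+π/2)..(π*i+π), |Real.cos s| = 1 := by
    rw [intervalIntegral.integral_congr (g := fun s => -((-1)^i * Real.cos s))
      (by intro s hs
          rw [Set.uIcc_of_le (by linarith [Real.pi_pos])] at hs
          exact abs_cos_second i hs.1 hs.2)]
    rw [intervalIntegral.integral_neg, intervalIntegral.integral_const_mul, integral_cos]
    have hs1 : Real.sin (π*i+π/2) = (-1)^i := by
      rw [Real.sin_add_pi_div_two, hcosπi]
    have hs0 : Real.sin (π*i+π) = 0 := by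
      have : π*i+π = (i+1:ℕ) * π := by push_cast; ring
      rw [this]; exact Real.sin_nat_mul_pi (i+1)
    rw [hs1, hs0, zero_sub, mul_neg, neg_neg, ← pow_add, Even.neg_one_pow ⟨i, rfl⟩]
  rw [← hsplit, h1, h2]; norm_num

lemma integral_cos_piece (j : ℕ) (hj : 1 ≤ j) (i : ℕ) :
    ∫ t in (π*i/j)..(π*(i+1)/j), Real.cos (j*t) = 0 := by
  have hj' : (j:ℝ) ≠ 0 := Nat.cast_ne_zero.mpr (by omega)
  have h := intervalIntegral.mul_integral_comp_mul_left (a := π*i/j) (b := π*(i+1)/j)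
    (f := fun s => Real.cos s) (c := (j:ℝ))
  have e1 : (j:ℝ) * (π*i/j) = π*i := by field_simp
  have e2 : (j:ℝ) * (π*(i+1)/j) = π*(i+1) := by field_simp
  rw [e1, e2] at h
  have hz : ∫ s in (π*i)..(π*(i+1)), Real.cos s = 0 := by
    rw [integral_cos]
    have hs0 : Real.sin (π*i) = 0 := by rw [mul_comm]; exact Real.sin_nat_mul_pi i
    have hs1 : Real.sin (π*(i+1)) = 0 := by
      have : π*((i:ℝ)+1) = ((i+1:ℕ):ℝ) * π := by push_cast; ring
      rw [this]; exact Real.sin_nat_mul_pi (i+1)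
    rw [hs0, hs1, sub_zero]
  rw [hz] at h
  exact (mul_eq_zero.mp h).resolve_left hj'

lemma integral_abs_cos_piece (j : ℕ) (hj : 1 ≤ j) (i : ℕ) :
    ∫ t in (π*i/j)..(π*(i+1)/j), |Real.cos (j*t)| = 2/j := by
  have hj' : (j:ℝ) ≠ 0 := Nat.cast_ne_zero.mpr (by omega)
  have h := intervalIntegral.mul_integral_comp_mul_left (a := π*i/j) (b := π*(i+1)/j)
    (f := fun s => |Real.cos s|) (c := (j:ℝ))
  have e1 : (j:ℝ) * (π*i/j) = π*i := by field_simp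
  have e2 : (j:ℝ) * (π*(i+1)/j) = π*i+π := by field_simp
  rw [e1, e2, integral_abs_cos_half] at h
  field_simp at h ⊢
  linarith [h]

lemma piece_bound (f : ℝ → ℝ) (j : ℕ) (hj : 1 ≤ j) (i : ℕ)
    (hf : ContinuousOn f (Set.Icc (π*i/j) (π*(i+1)/j)))
    (p q : ℝ)
    (hmax : ∀ t ∈ Set.Icc (π*i/j) (π*(i+1)/j), f t ≤ f p)
    (hmin : ∀ t ∈ Set.Icc (π*i/j) (π*(i+1)/j), f q ≤ f t)
    (hp : p ∈ Set.Icc (π*i/j) (π*(i+1)/j)) :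
    |∫ t in (π*i/j)..(π*(i+1)/j), f t * Real.cos (j*t)| ≤ (f p - f q)/j := by
  have hjpos : (0:ℝ) < j := by exact_mod_cast (by omega : 0 < j)
  set a := π*i/j with ha
  set b := π*(i+1)/j with hb
  have hab : a ≤ b := by
    have : π*(i:ℝ) ≤ π*((i:ℝ)+1) := by nlinarith [Real.pi_pos]
    exact div_le_div_of_nonneg_right this hjpos.le
  have hqp : f q ≤ f p := hmin p hp
  set c := (f p + f q)/2 with hc
  set D := (f p - f q)/2 with hD
  have hDnn : 0 ≤ D := by rw [hD]; linarith
  have huIcc : Set.uIcc a b = Set.Icc a b := Set.uIcc_of_le hab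
  have hcos : Continuous fun t => Real.cos ((j:ℝ)*t) := Real.continuous_cos.comp (continuous_const.mul continuous_id)
  have hint1 : IntervalIntegrable (fun t => f t * Real.cos ((j:ℝ)*t)) MeasureTheory.volume a b := by
    apply ContinuousOn.intervalIntegrable; rw [huIcc]; exact hf.mul hcos.continuousOn
  have hint2 : IntervalIntegrable (fun t => (f t - c) * Real.cos ((j:ℝ)*t)) MeasureTheory.volume a b := by
    apply ContinuousOn.intervalIntegrable; rw [huIcc]
    exact (hf.sub continuousOn_const).mul hcos.continuousOn
  have hint3 : IntervalIntegrable (fun t => |(f t - c) * Real.cos ((j:ℝ)*t)|) MeasureTheory.volume a b := by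
    apply ContinuousOn.intervalIntegrable; rw [huIcc]
    exact ((hf.sub continuousOn_const).mul hcos.continuousOn).abs
  have hint4 : IntervalIntegrable (fun t => D * |Real.cos ((j:ℝ)*t)|) MeasureTheory.volume a b :=
    (continuous_const.mul hcos.abs).intervalIntegrable a b
  have hintc : IntervalIntegrable (fun t => c * Real.cos ((j:ℝ)*t)) MeasureTheory.volume a b :=
    (continuous_const.mul hcos).intervalIntegrable a b
  have step1 : (∫ t in a..b, f t * Real.cos ((j:ℝ)*t))
      = ∫ t in a..b, (f t - c) * Real.cos ((j:ℝ)*t) := by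
    have hsub := intervalIntegral.integral_sub hint1 hintc
    have hzero : (∫ t in a..b, c * Real.cos ((j:ℝ)*t)) = 0 := by
      rw [intervalIntegral.integral_const_mul, integral_cos_piece j hj i, mul_zero]
    rw [show (fun t => (f t - c) * Real.cos ((j:ℝ)*t))
        = fun t => f t * Real.cos ((j:ℝ)*t) - c * Real.cos ((j:ℝ)*t) by funext t; ring]
    rw [hsub, hzero, sub_zero]
  rw [step1]
  calc |∫ t in a..b, (f t - c) * Real.cos ((j:ℝ)*t)|
      ≤ ∫ t in a..b, |(f t - c) * Real.cos ((j:ℝ)*t)| :=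
        intervalIntegral.abs_integral_le_integral_abs hab
    _ ≤ ∫ t in a..b, D * |Real.cos ((j:ℝ)*t)| := by
        apply intervalIntegral.integral_mono_on hab hint3 hint4
        intro t ht
        rw [abs_mul]
        apply mul_le_mul_of_nonneg_right _ (abs_nonneg _)
        rw [abs_le]
        constructor
        · have := hmin t ht; rw [hD, hc]; linarith
        · have := hmax t ht; rw [hD, hc]; linarith
    _ = D * (2/j) := by
        rw [intervalIntegral.integral_const_mul, integral_abs_cos_piece j hj i]
    _ = (f p - f q)/j := by rw [hD]; ring

end FourierAux

theorem fourier_cosine_coeff_sum_bound (f : ℝ → ℝ)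
    (hf : ContinuousOn f (Set.Icc 0 (2 * π)))
    (j : ℕ) (hj : 1 ≤ j) :
    ∃ x : ℕ → ℝ,
      (∀ k, 1 ≤ k → k < 4 * j → x k ≤ x (k + 1)) ∧
      (∀ k ∈ Finset.Icc 1 (4 * j), x k ∈ Set.Icc 0 (2 * π)) ∧
      (∀ k ∈ Finset.Icc 1 (2 * j),
        x (2 * k - 1) ∈ Set.Icc (π * ((k : ℝ) - 1) / j) (π * k / j) ∧
        x (2 * k) ∈ Set.Icc (π * ((k : ℝ) - 1) / j) (π * k / j)) ∧
      |(1 / π) * ∫ t in (0:ℝ)..(2 * π), f t * Real.cos (j * t)| ≤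
        (1 / (π * j)) * ∑ k ∈ Finset.Icc 1 (2 * j),
          |f (x (2 * k - 1)) - f (x (2 * k))| := by
  have hπ := Real.pi_pos
  have hjpos : (0:ℝ) < j := by exact_mod_cast (by omega : 0 < j)
  set a : ℕ → ℝ := fun i => π * i / j with ha
  have hamono : ∀ i i' : ℕ, i ≤ i' → a i ≤ a i' := by
    intro i i' h
    have h' : (i:ℝ) ≤ i' := by exact_mod_cast h
    apply div_le_div_of_nonneg_right _ hjpos.le
    nlinarith
  have ha0 : a 0 = 0 := by simp [ha]
  have haN : a (2*j) = 2*π := by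
    simp only [ha]; push_cast; field_simp
  have hsub : ∀ i, i < 2*j → Set.Icc (a i) (a (i+1)) ⊆ Set.Icc 0 (2*π) := by
    intro i hi
    apply Set.Icc_subset_Icc
    · rw [← ha0]; exact hamono 0 i (Nat.zero_le _)
    · rw [← haN]; exact hamono (i+1) (2*j) (by omega)
  have key : ∀ i : ℕ, ∃ p q : ℝ, i < 2*j →
      p ∈ Set.Icc (a i) (a (i+1)) ∧ q ∈ Set.Icc (a i) (a (i+1)) ∧
      (∀ t ∈ Set.Icc (a i) (a (i+1)), f t ≤ f p) ∧
      (∀ t ∈ Set.Icc (a i) (a (i+1)), f q ≤ f t) := by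
    intro i
    by_cases hi : i < 2*j
    · have hfc : ContinuousOn f (Set.Icc (a i) (a (i+1))) := hf.mono (hsub i hi)
      have hne : (Set.Icc (a i) (a (i+1))).Nonempty :=
        Set.nonempty_Icc.mpr (hamono i (i+1) (by omega))
      obtain ⟨p, hp, hpm⟩ := isCompact_Icc.exists_isMaxOn hne hfc
      obtain ⟨q, hq, hqm⟩ := isCompact_Icc.exists_isMinOn hne hfc
      exact ⟨p, q, fun _ => ⟨hp, hq, fun t ht => hpm ht, fun t ht => hqm ht⟩⟩
    · exact ⟨0, 0, fun h => absurd h hi⟩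
  choose p q hpq using key
  set x : ℕ → ℝ := fun n => if n % 2 = 1 then min (p ((n-1)/2)) (q ((n-1)/2))
      else max (p (n/2 - 1)) (q (n/2 - 1)) with hx
  have hxo : ∀ m : ℕ, x (2*m+1) = min (p m) (q m) := by
    intro m
    have h1 : (2*m+1) % 2 = 1 := by omega
    have h2 : (2*m+1-1)/2 = m := by omega
    simp only [hx, h1, h2, if_pos]
  have hxe : ∀ m : ℕ, 1 ≤ m → x (2*m) = max (p (m-1)) (q (m-1)) := by
    intro m hm
    have h1 : ¬ ((2*m) % 2 = 1) := by omega
    have h2 : (2*m)/2 - 1 = m - 1 := by omega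
    simp only [hx, h1, h2, if_neg, not_false_iff]
  -- min/max in interval
  have hminmem : ∀ i, i < 2*j → min (p i) (q i) ∈ Set.Icc (a i) (a (i+1)) := by
    intro i hi
    rcases le_total (p i) (q i) with h | h
    · rw [min_eq_left h]; exact (hpq i hi).1
    · rw [min_eq_right h]; exact (hpq i hi).2.1
  have hmaxmem : ∀ i, i < 2*j → max (p i) (q i) ∈ Set.Icc (a i) (a (i+1)) := by
    intro i hi
    rcases le_total (p i) (q i) with h | h
    · rw [max_eq_right h]; exact (hpq i hi).2.1
    · rw [max_eq_left h]; exact (hpq i hi).1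
  refine ⟨x, ?_, ?_, ?_, ?_⟩
  · -- monotone
    intro k hk1 hk2
    rcases Nat.even_or_odd k with ⟨m, hm⟩ | ⟨m, hm⟩
    · -- k = 2m even, 1 ≤ m, m < 2j
      have hm1 : 1 ≤ m := by omega
      have hm2 : m < 2*j := by omega
      have e1 : k = 2*m := by omega
      rw [e1, hxe m hm1, hxo m]
      have hmem := hmaxmem (m-1) (by omega)
      have h2 : (m-1)+1 = m := by omega
      rw [h2] at hmem
      exact hmem.2.trans (hminmem m hm2).1
    · -- k = 2m+1 odd
      have e1 : k = 2*m+1 := by omega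
      rw [e1]
      have e2 : 2*m+1+1 = 2*(m+1) := by omega
      rw [e2, hxo m, hxe (m+1) (by omega)]
      simp only [Nat.add_sub_cancel]
      exact min_le_max
  · -- membership in [0, 2π]
    intro k hk
    rw [Finset.mem_Icc] at hk
    rcases Nat.even_or_odd k with ⟨m, hm⟩ | ⟨m, hm⟩
    · have hm1 : 1 ≤ m := by omega
      have e1 : k = 2*m := by omega
      rw [e1, hxe m hm1]
      have hmem := hmaxmem (m-1) (by omega)
      have h2 : (m-1)+1 = m := by omega
      rw [h2] at hmem
      exact hsub (m-1) (by omega) (by rw [h2]; exact hmem)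
    · have e1 : k = 2*m+1 := by omega
      rw [e1, hxo m]
      exact hsub m (by omega) (hminmem m (by omega))
  · -- intervals
    intro k hk
    rw [Finset.mem_Icc] at hk
    have hk1 : 1 ≤ k := hk.1
    have hik : k - 1 < 2*j := by omega
    have hkk : (k-1)+1 = k := by omega
    have hcast : ((k-1:ℕ):ℝ) = (k:ℝ) - 1 := by
      push_cast [Nat.cast_sub hk1]; ring
    have hIcc : Set.Icc (π * ((k:ℝ) - 1) / j) (π * k / j) = Set.Icc (a (k-1)) (a ((k-1)+1)) := by
      rw [hkk]; simp only [ha, hcast]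
    have ho : x (2*k-1) = min (p (k-1)) (q (k-1)) := by
      have : 2*k-1 = 2*(k-1)+1 := by omega
      rw [this, hxo]
    have he : x (2*k) = max (p (k-1)) (q (k-1)) := by
      have : (2*k)/2 - 1 = k - 1 := by omega
      rw [hxe k hk1]
    rw [hIcc, ho, he]
    exact ⟨hminmem (k-1) hik, hmaxmem (k-1) hik⟩
  · -- the inequality
    have hint : ∀ i : ℕ, i < 2*j →
        IntervalIntegrable (fun t => f t * Real.cos ((j:ℝ)*t)) MeasureTheory.volume (a i) (a (i+1)) := by
      intro i hi
      apply ContinuousOn.intervalIntegrable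
      rw [Set.uIcc_of_le (hamono i (i+1) (by omega))]
      exact (hf.mono (hsub i hi)).mul
        ((Real.continuous_cos.comp (continuous_const.mul continuous_id)).continuousOn)
    have hsum := intervalIntegral.sum_integral_adjacent_intervals (a := a) (n := 2*j)
      (f := fun t => f t * Real.cos ((j:ℝ)*t)) (fun i hi => hint i hi)
    rw [ha0, haN] at hsum
    have hpiece : ∀ i, i < 2*j →
        |∫ t in (a i)..(a (i+1)), f t * Real.cos ((j:ℝ)*t)| ≤ (f (p i) - f (q i))/j := by
      intro i hi
      have e1 : a i = π*(i:ℝ)/j := by simp only [ha]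
      have e2 : a (i+1) = π*((i:ℝ)+1)/j := by simp only [ha]; push_cast; ring
      have H := hpq i hi
      have hfc : ContinuousOn f (Set.Icc (a i) (a (i+1))) := hf.mono (hsub i hi)
      rw [e1, e2] at H hfc
      rw [e1, e2]
      exact piece_bound f j hj i hfc (p i) (q i) H.2.2.1 H.2.2.2 H.1
    have hqple : ∀ i, i < 2*j → f (q i) ≤ f (p i) := fun i hi =>
      (hpq i hi).2.2.2 (p i) (hpq i hi).1
    -- rewrite RHS sum
    have hrhs : ∑ k ∈ Finset.Icc 1 (2*j), |f (x (2*k-1)) - f (x (2*k))|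
        = ∑ i ∈ Finset.range (2*j), (f (p i) - f (q i)) := by
      rw [show Finset.Icc 1 (2*j) = Finset.Ico 1 (2*j+1) by rw [Finset.Ico_add_one_right_eq_Icc],
        Finset.sum_Ico_eq_sum_range]
      simp only [Nat.add_sub_cancel]
      apply Finset.sum_congr rfl
      intro i hi
      rw [Finset.mem_range] at hi
      have hi' : i < 2*j := hi
      have ho : x (2*(1+i)-1) = min (p i) (q i) := by
        have e : 2*(1+i)-1 = 2*i+1 := by omega
        rw [e, hxo]
      have he : x (2*(1+i)) = max (p i) (q i) := by
        have e : 2*(1+i) = 2*(i+1) := by omega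
        rw [e, hxe (i+1) (by omega)]
        simp only [Nat.add_sub_cancel]
      rw [ho, he]
      rcases le_total (p i) (q i) with h | h
      · rw [min_eq_left h, max_eq_right h]
        exact abs_of_nonneg (by linarith [hqple i hi'])
      · rw [min_eq_right h, max_eq_left h, abs_sub_comm]
        exact abs_of_nonneg (by linarith [hqple i hi'])
    rw [hrhs]
    have hπ' : π ≠ 0 := ne_of_gt hπ
    have hj' : (j:ℝ) ≠ 0 := ne_of_gt hjpos
    calc |1 / π * ∫ t in (0:ℝ)..(2*π), f t * Real.cos ((j:ℝ)*t)|
        = (1/π) * |∫ t in (0:ℝ)..(2*π), f t * Real.cos ((j:ℝ)*t)| := by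
          rw [abs_mul, abs_of_pos (by positivity : (0:ℝ) < 1/π)]
      _ ≤ (1/π) * ∑ i ∈ Finset.range (2*j), (f (p i) - f (q i))/j := by
          apply mul_le_mul_of_nonneg_left _ (by positivity)
          calc |∫ t in (0:ℝ)..(2*π), f t * Real.cos ((j:ℝ)*t)|
              = |∑ i ∈ Finset.range (2*j), ∫ t in (a i)..(a (i+1)), f t * Real.cos ((j:ℝ)*t)| := by
                rw [hsum]
            _ ≤ ∑ i ∈ Finset.range (2*j), |∫ t in (a i)..(a (i+1)), f t * Real.cos ((j:ℝ)*t)| :=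
                Finset.abs_sum_le_sum_abs _ _
            _ ≤ ∑ i ∈ Finset.range (2*j), (f (p i) - f (q i))/j :=
                Finset.sum_le_sum (fun i hi => hpiece i (Finset.mem_range.mp hi))
      _ = 1/(π*↑j) * ∑ i ∈ Finset.range (2*j), (f (p i) - f (q i)) := by
          rw [← Finset.sum_div]
          field_simp
end

section
/- Let f be continuous of bounded variation on [0,2π], j ≥ 1, and let g be continuous on [0,2π] with j-th Fourier cosine coefficient 0. If h is continuous with |h(x) − g(x)| ≤ δ/2 for all x ∈ [0,2π] and h − g attains the uniform bound so that the total variation of h − g is at most N·δ for some N ∈ ℕ, and δ ≤ |a_j⁰|·πj/(qN) with q > 0 and a_j⁰ ≠ 0, then the j-th Fourier cosine coefficient of h has absolute value at most |a_j⁰|/q. -/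
open Real

private lemma abel_sum (f G : ℕ → ℝ) (n : ℕ) :
    ∑ i ∈ Finset.range n, f i * (G (i + 1) - G i) =
      f n * G n - f 0 * G 0 - ∑ i ∈ Finset.range n, (f (i + 1) - f i) * G (i + 1) := by
  induction n with
  | zero => simp
  | succ m ih =>
    rw [Finset.sum_range_succ, Finset.sum_range_succ (f := fun i => (f (i+1) - f i) * G (i+1)), ih]
    ring

private lemma cos_coef_bound (u : ℝ → ℝ) (j : ℕ) (hj : 1 ≤ j) (V : ℝ) (hV : 0 ≤ V)
    (hu : ContinuousOn u (Set.Icc 0 (2 * π)))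
    (hvar : eVariationOn u (Set.Icc 0 (2 * π)) ≤ ENNReal.ofReal V) :
    |∫ x in (0:ℝ)..(2 * π), u x * Real.cos (j * x)| ≤ V / j := by
  have hπ := Real.pi_pos
  have h2π : (0:ℝ) < 2 * π := by linarith
  have hjR : (0:ℝ) < j := by exact_mod_cast Nat.lt_of_lt_of_le Nat.zero_lt_one hj
  set F : ℝ → ℝ := fun x => Real.sin (j * x) / j with hFdef
  have hFderiv : ∀ x : ℝ, HasDerivAt F (Real.cos ((j:ℝ) * x)) x := by
    intro x
    have h1 : HasDerivAt (fun x : ℝ => (j : ℝ) * x) (j : ℝ) x := by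
      simpa using (hasDerivAt_id x).const_mul (j : ℝ)
    have h2 : HasDerivAt (fun x : ℝ => Real.sin ((j : ℝ) * x)) (Real.cos ((j:ℝ) * x) * j) x :=
      (Real.hasDerivAt_sin _).comp x h1
    have h3 := h2.div_const (j : ℝ)
    have : Real.cos ((j:ℝ) * x) * (j:ℝ) / (j:ℝ) = Real.cos ((j:ℝ) * x) := by
      field_simp
    rw [this] at h3
    exact h3
  have hcosint : ∀ a b : ℝ, ∫ x in a..b, Real.cos ((j:ℝ) * x) = F b - F a := by
    intro a b
    exact intervalIntegral.integral_eq_sub_of_hasDerivAt (fun x _ => hFderiv x)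
      ((Continuous.intervalIntegrable (by continuity) a b))
  have hFbound : ∀ x : ℝ, |F x| ≤ 1 / j := by
    intro x
    rw [hFdef]
    simp only
    rw [abs_div, abs_of_pos hjR]
    have : |Real.sin ((j:ℝ) * x)| ≤ 1 := abs_le.mpr ⟨Real.neg_one_le_sin _, Real.sin_le_one _⟩
    gcongr
  have hF0 : F 0 = 0 := by simp [hFdef]
  have hF2π : F (2 * π) = 0 := by
    have hs : Real.sin ((j:ℝ) * (2 * π)) = 0 := by
      have : ((j:ℝ) * (2 * π)) = ((2 * j : ℕ) : ℝ) * π := by push_cast; ring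
      rw [this, Real.sin_nat_mul_pi]
    simp [hFdef, hs]
  have hcos : Continuous fun x : ℝ => Real.cos ((j:ℝ) * x) :=
    Real.continuous_cos.comp (continuous_const.mul continuous_id)
  refine le_of_forall_pos_le_add fun ε hε => ?_
  obtain ⟨d, hd, hmod⟩ := Metric.uniformContinuousOn_iff.mp
    (isCompact_Icc.uniformContinuousOn_of_continuous hu) (ε / (2 * π)) (by positivity)
  obtain ⟨n, hn⟩ := exists_nat_gt (2 * π / d)
  have hn0 : 0 < n := by
    have h0 : (0:ℝ) < 2 * π / d := by positivity
    exact_mod_cast Nat.cast_pos.mp (h0.trans hn)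
  have hnR : (0:ℝ) < n := Nat.cast_pos.mpr hn0
  set c : ℝ := 2 * π / n with hcdef
  have hc : 0 < c := by positivity
  have hcd : c < d := by
    rw [hcdef, div_lt_iff₀ hnR]
    have := (div_lt_iff₀ hd).mp hn
    linarith [mul_comm d (n:ℝ)]
  set pt : ℕ → ℝ := fun i => c * i with hptdef
  have hptmono : Monotone pt := fun a b hab => by
    simp only [hptdef]
    exact mul_le_mul_of_nonneg_left (Nat.cast_le.mpr hab) hc.le
  have hptn : pt n = 2 * π := by
    simp only [hptdef, hcdef]
    field_simp
  have hpt0 : pt 0 = 0 := by simp [hptdef]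
  have hptmem : ∀ i, i ≤ n → pt i ∈ Set.Icc 0 (2 * π) := by
    intro i hi
    constructor
    · simp only [hptdef]; positivity
    · rw [← hptn]; exact hptmono hi
  have hptstep : ∀ i : ℕ, pt (i + 1) - pt i = c := by
    intro i; simp only [hptdef]; push_cast; ring
  -- integrability on subintervals
  have hw : ContinuousOn (fun x => u x * Real.cos ((j:ℝ) * x)) (Set.Icc 0 (2 * π)) :=
    hu.mul (Continuous.continuousOn hcos)
  have hint : ∀ k, k < n → IntervalIntegrable (fun x => u x * Real.cos ((j:ℝ) * x))
      MeasureTheory.volume (pt k) (pt (k + 1)) := by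
    intro k hk
    apply ContinuousOn.intervalIntegrable
    apply hw.mono
    rw [Set.uIcc_of_le (hptmono (Nat.le_succ k))]
    exact Set.Icc_subset_Icc (hptmem k hk.le).1 (hptmem (k+1) hk).2
  have hsplit : ∑ i ∈ Finset.range n, ∫ x in pt i..pt (i + 1), u x * Real.cos ((j:ℝ) * x) =
      ∫ x in (0:ℝ)..(2 * π), u x * Real.cos ((j:ℝ) * x) := by
    rw [← hpt0, ← hptn]
    exact intervalIntegral.sum_integral_adjacent_intervals hint
  -- decompose each piece
  have hpiece : ∀ i, i < n → ∫ x in pt i..pt (i + 1), u x * Real.cos ((j:ℝ) * x) =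
      (∫ x in pt i..pt (i + 1), (u x - u (pt i)) * Real.cos ((j:ℝ) * x)) +
        u (pt i) * (F (pt (i + 1)) - F (pt i)) := by
    intro i hi
    have hsub : Set.uIcc (pt i) (pt (i+1)) ⊆ Set.Icc 0 (2 * π) := by
      rw [Set.uIcc_of_le (hptmono (Nat.le_succ i))]
      exact Set.Icc_subset_Icc (hptmem i hi.le).1 (hptmem (i+1) hi).2
    have h1 : IntervalIntegrable (fun x => (u x - u (pt i)) * Real.cos ((j:ℝ) * x))
        MeasureTheory.volume (pt i) (pt (i + 1)) := by
      apply ContinuousOn.intervalIntegrable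
      exact (((hu.mono hsub).sub continuousOn_const).mul (Continuous.continuousOn hcos))
    have h2 : IntervalIntegrable (fun x => u (pt i) * Real.cos ((j:ℝ) * x))
        MeasureTheory.volume (pt i) (pt (i + 1)) :=
      Continuous.intervalIntegrable (continuous_const.mul hcos) _ _
    have heq : ∀ x ∈ Set.uIcc (pt i) (pt (i+1)), u x * Real.cos ((j:ℝ) * x)
        = (u x - u (pt i)) * Real.cos ((j:ℝ) * x) + u (pt i) * Real.cos ((j:ℝ) * x) := by
      intro x _; ring
    rw [intervalIntegral.integral_congr heq, intervalIntegral.integral_add h1 h2,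
      intervalIntegral.integral_const_mul, hcosint]
  -- error bound on each piece
  have hA : ∀ i, i < n → |∫ x in pt i..pt (i + 1), (u x - u (pt i)) * Real.cos ((j:ℝ) * x)| ≤
      ε / (2 * π) * c := by
    intro i hi
    have hle : pt i ≤ pt (i + 1) := hptmono (Nat.le_succ i)
    have hb := intervalIntegral.norm_integral_le_of_norm_le_const
      (C := ε / (2 * π)) (f := fun x => (u x - u (pt i)) * Real.cos ((j:ℝ) * x))
      (a := pt i) (b := pt (i+1)) ?_
    · rw [Real.norm_eq_abs] at hb
      have : |pt (i+1) - pt i| = c := by rw [hptstep, abs_of_pos hc]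
      rwa [this] at hb
    · intro x hx
      rw [Set.uIoc_of_le hle] at hx
      have hxmem : x ∈ Set.Icc 0 (2 * π) :=
        ⟨(hptmem i hi.le).1.trans hx.1.le, hx.2.trans (hptmem (i+1) hi).2⟩
      have hdist : dist x (pt i) < d := by
        rw [Real.dist_eq, abs_of_nonneg (by linarith [hx.1.le] : (0:ℝ) ≤ x - pt i)]
        have : x - pt i ≤ c := by
          have := hptstep i
          linarith [hx.2]
        linarith
      have hud : |u x - u (pt i)| < ε / (2 * π) := by
        have := hmod x hxmem (pt i) (hptmem i hi.le) hdist
        rwa [Real.dist_eq] at this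
      rw [Real.norm_eq_abs, abs_mul]
      calc |u x - u (pt i)| * |Real.cos ((j:ℝ)*x)| ≤ |u x - u (pt i)| * 1 := by
            exact mul_le_mul_of_nonneg_left (abs_cos_le_one _) (abs_nonneg _)
        _ ≤ ε / (2 * π) := by rw [mul_one]; exact hud.le
  -- variation sum bound
  have hvarsum : ∑ i ∈ Finset.range n, |u (pt (i + 1)) - u (pt i)| ≤ V := by
    have hseqmono : Monotone (fun i => pt (min i n)) :=
      fun a b hab => hptmono (min_le_min hab le_rfl)
    have hseqmem : ∀ i, pt (min i n) ∈ Set.Icc 0 (2 * π) :=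
      fun i => hptmem _ (min_le_right _ _)
    have hsum := eVariationOn.sum_le (f := u) (n := n) hseqmono hseqmem
    have heq : ∑ i ∈ Finset.range n, edist (u (pt (min (i + 1) n))) (u (pt (min i n))) =
        ENNReal.ofReal (∑ i ∈ Finset.range n, |u (pt (i + 1)) - u (pt i)|) := by
      rw [ENNReal.ofReal_sum_of_nonneg (fun i _ => abs_nonneg _)]
      refine Finset.sum_congr rfl fun i hi => ?_
      rw [Finset.mem_range] at hi
      rw [min_eq_left hi.le, min_eq_left (Nat.succ_le_of_lt hi), edist_dist, Real.dist_eq]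
    rw [heq] at hsum
    exact (ENNReal.ofReal_le_ofReal_iff hV).mp (hsum.trans hvar)
  -- Abel summation
  have habel : ∑ i ∈ Finset.range n, u (pt i) * (F (pt (i + 1)) - F (pt i)) =
      - ∑ i ∈ Finset.range n, (u (pt (i + 1)) - u (pt i)) * F (pt (i + 1)) := by
    have h := abel_sum (fun i => u (pt i)) (fun i => F (pt i)) n
    simp only [hptn, hpt0, hF2π, hF0, mul_zero, sub_zero, zero_sub] at h
    exact h
  have hS : |∑ i ∈ Finset.range n, u (pt i) * (F (pt (i + 1)) - F (pt i))| ≤ V / j := by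
    rw [habel, abs_neg]
    calc |∑ i ∈ Finset.range n, (u (pt (i + 1)) - u (pt i)) * F (pt (i + 1))|
        ≤ ∑ i ∈ Finset.range n, |(u (pt (i + 1)) - u (pt i)) * F (pt (i + 1))| :=
          Finset.abs_sum_le_sum_abs _ _
      _ ≤ ∑ i ∈ Finset.range n, |u (pt (i + 1)) - u (pt i)| * (1 / j) := by
          refine Finset.sum_le_sum fun i _ => ?_
          rw [abs_mul]
          exact mul_le_mul_of_nonneg_left (hFbound _) (abs_nonneg _)
      _ = (∑ i ∈ Finset.range n, |u (pt (i + 1)) - u (pt i)|) * (1 / j) := by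
          rw [Finset.sum_mul]
      _ ≤ V * (1 / j) := mul_le_mul_of_nonneg_right hvarsum (by positivity)
      _ = V / j := by ring
  -- combine everything
  have hdecomp : ∫ x in (0:ℝ)..(2 * π), u x * Real.cos ((j:ℝ) * x) =
      (∑ i ∈ Finset.range n, ∫ x in pt i..pt (i + 1), (u x - u (pt i)) * Real.cos ((j:ℝ) * x)) +
        ∑ i ∈ Finset.range n, u (pt i) * (F (pt (i + 1)) - F (pt i)) := by
    rw [← hsplit, ← Finset.sum_add_distrib]
    exact Finset.sum_congr rfl fun i hi => hpiece i (Finset.mem_range.mp hi)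
  have hAsum : |∑ i ∈ Finset.range n, ∫ x in pt i..pt (i + 1),
      (u x - u (pt i)) * Real.cos ((j:ℝ) * x)| ≤ ε := by
    calc |∑ i ∈ Finset.range n, ∫ x in pt i..pt (i + 1), (u x - u (pt i)) * Real.cos ((j:ℝ) * x)|
        ≤ ∑ i ∈ Finset.range n, |∫ x in pt i..pt (i + 1), (u x - u (pt i)) * Real.cos ((j:ℝ) * x)| :=
          Finset.abs_sum_le_sum_abs _ _
      _ ≤ ∑ _i ∈ Finset.range n, ε / (2 * π) * c :=
          Finset.sum_le_sum fun i hi => hA i (Finset.mem_range.mp hi)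
      _ = n * (ε / (2 * π) * c) := by rw [Finset.sum_const, Finset.card_range, nsmul_eq_mul]
      _ = ε := by
          rw [hcdef]
          field_simp
  rw [hdecomp]
  calc |(∑ i ∈ Finset.range n, ∫ x in pt i..pt (i + 1), (u x - u (pt i)) * Real.cos ((j:ℝ) * x)) +
        ∑ i ∈ Finset.range n, u (pt i) * (F (pt (i + 1)) - F (pt i))|
      ≤ |∑ i ∈ Finset.range n, ∫ x in pt i..pt (i + 1), (u x - u (pt i)) * Real.cos ((j:ℝ) * x)| +
        |∑ i ∈ Finset.range n, u (pt i) * (F (pt (i + 1)) - F (pt i))| := abs_add_le _ _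
    _ ≤ ε + V / j := add_le_add hAsum hS
    _ = V / j + ε := by ring

theorem controlled_distortion_band (f g h : ℝ → ℝ) (j : ℕ) (hj : 1 ≤ j)
    (q δ : ℝ) (hq : 0 < q) (N : ℕ) (hN : 1 ≤ N)
    (a0 : ℝ) (hne : a0 ≠ 0)
    (hf : ContinuousOn f (Set.Icc 0 (2 * π)))
    (hfbv : BoundedVariationOn f (Set.Icc 0 (2 * π)))
    (hg : ContinuousOn g (Set.Icc 0 (2 * π)))
    (hgcoef : (1 / π) * ∫ x in (0:ℝ)..(2 * π), g x * Real.cos (j * x) = 0)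
    (hh : ContinuousOn h (Set.Icc 0 (2 * π)))
    (hband : ∀ x ∈ Set.Icc 0 (2 * π), |h x - g x| ≤ δ / 2)
    (hvar : eVariationOn (fun x => h x - g x) (Set.Icc 0 (2 * π)) ≤
      ENNReal.ofReal (N * δ))
    (hδ : δ ≤ |a0| * π * j / (q * N)) :
    |(1 / π) * ∫ x in (0:ℝ)..(2 * π), h x * Real.cos (j * x)| ≤ |a0| / q := by
  have hπ := Real.pi_pos
  have h2π : (0:ℝ) < 2 * π := by linarith
  have hjR : (0:ℝ) < j := by exact_mod_cast Nat.lt_of_lt_of_le Nat.zero_lt_one hj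
  have hNR : (0:ℝ) < N := by exact_mod_cast Nat.lt_of_lt_of_le Nat.zero_lt_one hN
  have hδ0 : 0 ≤ δ := by
    have h1 := hband 0 ⟨le_rfl, by linarith⟩
    have h0 := abs_nonneg (h 0 - g 0)
    linarith
  have hcos : Continuous fun x : ℝ => Real.cos ((j:ℝ) * x) :=
    Real.continuous_cos.comp (continuous_const.mul continuous_id)
  have hgi : IntervalIntegrable (fun x => g x * Real.cos ((j:ℝ) * x))
      MeasureTheory.volume 0 (2 * π) := by
    apply ContinuousOn.intervalIntegrable
    rw [Set.uIcc_of_le (by linarith : (0:ℝ) ≤ 2 * π)]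
    exact hg.mul hcos.continuousOn
  have hui : IntervalIntegrable (fun x => (h x - g x) * Real.cos ((j:ℝ) * x))
      MeasureTheory.volume 0 (2 * π) := by
    apply ContinuousOn.intervalIntegrable
    rw [Set.uIcc_of_le (by linarith : (0:ℝ) ≤ 2 * π)]
    exact (hh.sub hg).mul hcos.continuousOn
  have hgzero : ∫ x in (0:ℝ)..(2 * π), g x * Real.cos ((j:ℝ) * x) = 0 := by
    rcases mul_eq_zero.mp hgcoef with h1 | h1
    · exact absurd h1 (one_div_ne_zero hπ.ne')
    · exact h1
  have hsplit : ∫ x in (0:ℝ)..(2 * π), h x * Real.cos ((j:ℝ) * x)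
      = ∫ x in (0:ℝ)..(2 * π), (h x - g x) * Real.cos ((j:ℝ) * x) := by
    have heq : ∀ x ∈ Set.uIcc (0:ℝ) (2 * π), h x * Real.cos ((j:ℝ) * x)
        = (h x - g x) * Real.cos ((j:ℝ) * x) + g x * Real.cos ((j:ℝ) * x) := fun x _ => by ring
    rw [intervalIntegral.integral_congr heq, intervalIntegral.integral_add hui hgi, hgzero,
      add_zero]
  have hkey := cos_coef_bound (fun x => h x - g x) j hj ((N:ℝ) * δ) (by positivity)
    (hh.sub hg) hvar
  rw [hsplit, abs_mul, abs_of_pos (by positivity : (0:ℝ) < 1 / π)]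
  have harith : (1 / π) * ((N:ℝ) * δ / j) ≤ |a0| / q := by
    have hqN : δ * (q * N) ≤ |a0| * π * j := (le_div_iff₀ (by positivity)).mp hδ
    have hrw : (1 / π) * ((N:ℝ) * δ / j) = (N:ℝ) * δ * q / (π * (j:ℝ) * q) := by
      field_simp
    rw [hrw, div_le_div_iff₀ (by positivity) hq]
    calc (N:ℝ) * δ * q * q = δ * (q * N) * q := by ring
      _ ≤ |a0| * π * j * q := by nlinarith
      _ = |a0| * (π * (j:ℝ) * q) := by ring
  calc (1 / π) * |∫ x in (0:ℝ)..(2 * π), (h x - g x) * Real.cos ((j:ℝ) * x)|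
      ≤ (1 / π) * ((N:ℝ) * δ / j) := mul_le_mul_of_nonneg_left hkey (by positivity)
    _ ≤ |a0| / q := harith
end
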